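/- The braid group B₃ admits the presentation ⟨a₁, a₂, a₃ | a₂a₁ = a₃a₂, a₃a₂ = a₁a₃⟩: the group presented by three generators x₁, x₂, x₃ subject to the relations x₂x₁ = x₃x₂ and x₃x₂ = x₁x₃ is isomorphic to B₃ via an isomorphism sending x₁ to σ₁, x₂ to σ₂, and x₃ to σ₁⁻¹σ₂σ₁. -/

import Mathlib

/-- The braid relation σ₁σ₂σ₁ = σ₂σ₁σ₂ as a relator in the free group on two generators. -/
def braidRel : Set (FreeGroup (Fin 2)) :=
  {FreeGroup.of 0 * FreeGroup.of 1 * FreeGroup.of 0 *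
    (FreeGroup.of 1 * FreeGroup.of 0 * FreeGroup.of 1)⁻¹}

/-- The braid group on three strands, presented as ⟨σ₁, σ₂ | σ₁σ₂σ₁ = σ₂σ₁σ₂⟩. -/
abbrev B₃ : Type := PresentedGroup braidRel

/-- The first standard generator σ₁ of B₃. -/
def σ₁ : B₃ := PresentedGroup.of 0

/-- The second standard generator σ₂ of B₃. -/
def σ₂ : B₃ := PresentedGroup.of 1

def a₁ : B₃ := σ₁
def a₂ : B₃ := σ₂
def a₃ : B₃ := σ₁⁻¹ * σ₂ * σ₁
/-- Relators for the presentation ⟨x₁, x₂, x₃ | x₂x₁ = x₃x₂, x₃x₂ = x₁x₃⟩. -/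
def xRels : Set (FreeGroup (Fin 3)) :=
  {FreeGroup.of 1 * FreeGroup.of 0 * (FreeGroup.of 2 * FreeGroup.of 1)⁻¹,
   FreeGroup.of 2 * FreeGroup.of 1 * (FreeGroup.of 0 * FreeGroup.of 2)⁻¹}

/-- relator holds in a presented group -/
lemma rel_eq_one {α : Type*} {rels : Set (FreeGroup α)} {r : FreeGroup α} (hr : r ∈ rels) :
    (QuotientGroup.mk r : PresentedGroup rels) = 1 :=
  (QuotientGroup.eq_one_iff r).mpr (Subgroup.subset_normalClosure hr)

lemma braid_rel : σ₁ * σ₂ * σ₁ = σ₂ * σ₁ * σ₂ := by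
  have h := rel_eq_one (rels := braidRel) (r := FreeGroup.of 0 * FreeGroup.of 1 * FreeGroup.of 0 *
    (FreeGroup.of 1 * FreeGroup.of 0 * FreeGroup.of 1)⁻¹) rfl
  have : (σ₁ * σ₂ * σ₁) * (σ₂ * σ₁ * σ₂)⁻¹ = 1 := by
    exact h
  group at this ⊢
  exact mul_inv_eq_one.mp this

def y (i : Fin 3) : PresentedGroup xRels := PresentedGroup.of i

lemma xrel1 : y 1 * y 0 = y 2 * y 1 := by
  have h := rel_eq_one (rels := xRels) (r := FreeGroup.of 1 * FreeGroup.of 0 *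
    (FreeGroup.of 2 * FreeGroup.of 1)⁻¹) (Or.inl rfl)
  have : (y 1 * y 0) * (y 2 * y 1)⁻¹ = 1 := by
    exact h
  exact mul_inv_eq_one.mp this

lemma xrel2 : y 2 * y 1 = y 0 * y 2 := by
  have h := rel_eq_one (rels := xRels) (r := FreeGroup.of 2 * FreeGroup.of 1 *
    (FreeGroup.of 0 * FreeGroup.of 2)⁻¹) (Or.inr rfl)
  have : (y 2 * y 1) * (y 0 * y 2)⁻¹ = 1 := by
    exact h
  exact mul_inv_eq_one.mp this

/-- forward map data -/
def fwdFun : Fin 3 → B₃ := ![σ₁, σ₂, σ₁⁻¹ * σ₂ * σ₁]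

lemma key_rel : (σ₁ : B₃)⁻¹ * σ₂ * σ₁ * σ₂ = σ₂ * σ₁ := by
  have hb := braid_rel
  calc σ₁⁻¹ * σ₂ * σ₁ * σ₂ = σ₁⁻¹ * (σ₂ * σ₁ * σ₂) := by group
    _ = σ₁⁻¹ * (σ₁ * σ₂ * σ₁) := by rw [hb]
    _ = σ₂ * σ₁ := by group

lemma fwd_rels : ∀ r ∈ xRels, FreeGroup.lift fwdFun r = 1 := by
  rintro r (rfl | rfl) <;>
  · simp only [map_mul, map_inv, FreeGroup.lift_apply_of, fwdFun]
    simp only [Matrix.cons_val_zero, Matrix.cons_val_one, Matrix.head_cons,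
      Matrix.cons_val_two, Matrix.tail_cons]
    rw [mul_inv_eq_one]
    have hk := key_rel
    first
      | (rw [show (σ₁:B₃)⁻¹ * σ₂ * σ₁ * σ₂ = σ₂ * σ₁ from hk])
      | (rw [show σ₂ * σ₁ = (σ₁:B₃)⁻¹ * σ₂ * σ₁ * σ₂ from hk.symm])
    try group

def fwd : PresentedGroup xRels →* B₃ := PresentedGroup.toGroup fwd_rels

def bwdFun : Fin 2 → PresentedGroup xRels := ![y 0, y 1]

lemma y_braid : y 0 * y 1 * y 0 = y 1 * y 0 * y 1 := by
  have h1 := xrel1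
  have h2 := xrel2
  calc y 0 * y 1 * y 0 = y 0 * (y 1 * y 0) := by group
    _ = y 0 * (y 0 * y 2) := by rw [h1, h2]
    _ = (y 0 * y 2) * y 1 := by
        have : y 0 * y 2 * y 1 = y 0 * (y 2 * y 1) := by group
        rw [this, h2]
    _ = y 2 * y 1 * y 1 := by rw [← h2]
    _ = y 1 * y 0 * y 1 := by rw [← h1]

lemma bwd_rels : ∀ r ∈ braidRel, FreeGroup.lift bwdFun r = 1 := by
  rintro r rfl
  simp only [map_mul, map_inv, FreeGroup.lift_apply_of, bwdFun, Matrix.cons_val_zero,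
    Matrix.cons_val_one, Matrix.head_cons]
  rw [mul_inv_eq_one]
  exact y_braid

def bwd : B₃ →* PresentedGroup xRels := PresentedGroup.toGroup bwd_rels

lemma fwd_y0 : fwd (y 0) = σ₁ := PresentedGroup.toGroup.of fwd_rels
lemma fwd_y1 : fwd (y 1) = σ₂ := PresentedGroup.toGroup.of fwd_rels
lemma fwd_y2 : fwd (y 2) = σ₁⁻¹ * σ₂ * σ₁ := PresentedGroup.toGroup.of fwd_rels

lemma bwd_σ₁ : bwd σ₁ = y 0 := PresentedGroup.toGroup.of bwd_rels
lemma bwd_σ₂ : bwd σ₂ = y 1 := PresentedGroup.toGroup.of bwd_rels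

/-- The group presented by x₁, x₂, x₃ with relations x₂x₁ = x₃x₂ and x₃x₂ = x₁x₃ is
isomorphic to B₃ via an isomorphism sending x₁ ↦ σ₁, x₂ ↦ σ₂, x₃ ↦ σ₁⁻¹σ₂σ₁. -/
theorem xPresentation_iso_B₃ :
    ∃ e : PresentedGroup xRels ≃* B₃,
      e (PresentedGroup.of 0) = σ₁ ∧
      e (PresentedGroup.of 1) = σ₂ ∧
      e (PresentedGroup.of 2) = σ₁⁻¹ * σ₂ * σ₁ := by
  refine ⟨MonoidHom.toMulEquiv fwd bwd ?_ ?_, fwd_y0, fwd_y1, fwd_y2⟩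
  · ext i
    fin_cases i
    · simp [MonoidHom.comp_apply]
      rw [show (PresentedGroup.of (0 : Fin 3) : PresentedGroup xRels) = y 0 from rfl,
        fwd_y0, bwd_σ₁]
    · simp [MonoidHom.comp_apply]
      rw [show (PresentedGroup.of (1 : Fin 3) : PresentedGroup xRels) = y 1 from rfl,
        fwd_y1, bwd_σ₂]
    · simp [MonoidHom.comp_apply]
      rw [show (PresentedGroup.of (2 : Fin 3) : PresentedGroup xRels) = y 2 from rfl,
        fwd_y2]
      simp [map_mul, map_inv, bwd_σ₁, bwd_σ₂]
      have h1 := xrel1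
      group
      rw [show y 0 ^ (-1 : ℤ) * y 1 * y 0 = (y 0)⁻¹ * (y 1 * y 0) by group, h1]
      group
      rw [show y 0 ^ (-1:ℤ) * y 2 * y 1 = (y 0)⁻¹ * (y 2 * y 1) by group, xrel2]
      group
  · ext i
    fin_cases i
    · simp [MonoidHom.comp_apply]
      rw [show (PresentedGroup.of (0 : Fin 2) : B₃) = σ₁ from rfl, bwd_σ₁, fwd_y0]
    · simp [MonoidHom.comp_apply]
      rw [show (PresentedGroup.of (1 : Fin 2) : B₃) = σ₂ from rfl, bwd_σ₂, fwd_y1]
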